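/- Let T be a string of length n and T' the string obtained from T by substituting the character at position i (with T'[j] = T[j] for j ≠ i). Then γ(T') ≤ γ(T) + O(√n); more precisely there is a constant C such that γ(T') ≤ γ(T) + C·√n for all n ≥ 1. -/

import Mathlib

def subStr {α : Type*} (W : List α) (l r : ℕ) : List α :=
  (W.drop (l - 1)).take (r - l + 1)

def IsAttractor {α : Type*} (W : List α) (Γ : Set ℕ) : Prop :=
  ∀ l r : ℕ, 1 ≤ l → l ≤ r → r ≤ W.length →
    ∃ l' r' p : ℕ, 1 ≤ l' ∧ l' ≤ r' ∧ r' ≤ W.length ∧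
      subStr W l' r' = subStr W l r ∧ p ∈ Γ ∧ l' ≤ p ∧ p ≤ r'

noncomputable def gammaAttr {α : Type*} (T : List α) : ℕ :=
  sInf {k | ∃ Γ : Finset ℕ, ↑Γ ⊆ Set.Icc 1 T.length ∧ IsAttractor T ↑Γ ∧ Γ.card = k}

lemma subStr_length {α : Type*} (W : List α) {l r : ℕ} (h1 : 1 ≤ l) (h2 : l ≤ r)
    (h3 : r ≤ W.length) : (subStr W l r).length = r - l + 1 := by
  simp only [subStr, List.length_take, List.length_drop]
  omega

lemma subStr_take_prefix {α : Type*} (W : List α) (l m m' : ℕ) (h : m ≤ m') :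
    subStr W l (l + m) = (subStr W l (l + m')).take (m + 1) := by
  simp only [subStr, List.take_take]
  congr 1
  omega

lemma subStr_eq_of_take_eq {α : Type*} {W W' : List α} {l r : ℕ} (h1 : 1 ≤ l) (h2 : l ≤ r)
    (h : W.take r = W'.take r) : subStr W l r = subStr W' l r := by
  have key : ∀ V : List α, subStr V l r = ((V.take r).drop (l - 1)).take (r - l + 1) := by
    intro V
    rw [List.drop_take, List.take_take, subStr]
    congr 1
    omega
  rw [key W, key W', h]

lemma subStr_eq_of_drop_eq {α : Type*} {W W' : List α} {l r d : ℕ} (h1 : d + 1 ≤ l)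
    (h : W.drop d = W'.drop d) : subStr W l r = subStr W' l r := by
  have key : ∀ V : List α, subStr V l r = ((V.drop d).drop (l - 1 - d)).take (r - l + 1) := by
    intro V
    rw [List.drop_drop, subStr]
    congr 2
    omega
  rw [key W, key W', h]

/-- There is a constant `C` such that whenever `T'` is obtained from a string `T`
(of length `n ≥ 1`) by substituting one character, `γ(T') ≤ γ(T) + C·√n`. -/
theorem stmt4 {α : Type*} :
    ∃ C : ℝ, 0 < C ∧ ∀ (u v : List α) (a b : α),
      (gammaAttr (u ++ b :: v) : ℝ) ≤
        gammaAttr (u ++ a :: v) + C * Real.sqrt ((u ++ a :: v).length) := by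
  classical
  refine ⟨5, by norm_num, fun u v a b => ?_⟩
  set T : List α := u ++ a :: v with hT
  set T' : List α := u ++ b :: v with hT'
  set n : ℕ := T.length with hn
  have hnval : n = u.length + v.length + 1 := by simp [hn, hT]; omega
  have hlen' : T'.length = n := by simp [hT', hnval]; omega
  have hn1 : 1 ≤ n := by omega
  set i : ℕ := u.length + 1 with hi
  have hin : i ≤ n := by omega
  -- agreement of T and T' off position i
  have htake : ∀ r ≤ u.length, T.take r = T'.take r := by
    intro r hr
    rw [hT, hT', List.take_append_of_le_length hr, List.take_append_of_le_length hr]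
  have hdrop : T.drop i = T'.drop i := by
    rw [hT, hT', hi]
    have h1 : (u ++ a :: v).drop (u.length + 1) = v := by simp [List.drop_append]
    have h2 : (u ++ b :: v).drop (u.length + 1) = v := by simp [List.drop_append]
    rw [h1, h2]
  have agree : ∀ l r : ℕ, 1 ≤ l → l ≤ r → (r < i ∨ i < l) → subStr T' l r = subStr T l r := by
    intro l r h1 h2 hav
    rcases hav with hav | hav
    · exact subStr_eq_of_take_eq h1 h2 (htake r (by omega)).symm
    · exact subStr_eq_of_drop_eq (show i + 1 ≤ l by omega) hdrop.symm
  -- an optimal attractor for T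
  have hfull : gammaAttr T ∈
      {k | ∃ Γ : Finset ℕ, ↑Γ ⊆ Set.Icc 1 T.length ∧ IsAttractor T ↑Γ ∧ Γ.card = k} := by
    apply Nat.sInf_mem
    refine ⟨(Finset.Icc 1 n).card, Finset.Icc 1 n, ?_, ?_, rfl⟩
    · rw [Finset.coe_Icc, ← hn]
    · intro l r h1 h2 h3
      refine ⟨l, r, l, h1, h2, h3, rfl, ?_, le_refl l, h2⟩
      simp only [Finset.coe_Icc, Set.mem_Icc]
      rw [← hn] at h3
      exact ⟨h1, le_trans h2 h3⟩
  obtain ⟨Γ, hΓsub, hΓattr, hΓcard⟩ := hfull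
  -- parameters
  set s : ℕ := Nat.sqrt n + 1 with hs
  have hspos : 0 < s := by omega
  -- problematic-pair predicate
  set P : ℕ → ℕ → Prop := fun a' b' => ∃ l₀, 1 ≤ l₀ ∧ l₀ + a' + b' ≤ n ∧
      (l₀ + a' + b' < i ∨ i < l₀) ∧ subStr T l₀ (l₀ + a' + b') = subStr T (i - a') (i + b')
    with hP
  set g : ℕ → ℕ := fun a' => Nat.findGreatest (P a') (s - 1) with hg
  set f : ℕ → ℕ := fun a' => if h : P a' (g a') then Classical.choose h + a' else 1 with hf
  -- the new attractor
  set R : Finset ℕ := (Finset.range ((n - 1) / s + 1)).image (fun j => j * s + 1) with hR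
  set F : Finset ℕ := (Finset.range s).image f with hF
  set Γ' : Finset ℕ := Γ ∪ {i} ∪ R ∪ F with hΓ'
  have hmemΓ' : ∀ x, (x ∈ Γ ∨ x = i ∨ x ∈ R ∨ x ∈ F) → x ∈ Γ' := by
    intro x hx
    simp only [hΓ', Finset.mem_union, Finset.mem_singleton]
    tauto
  -- Γ' ⊆ [1, n]
  have hΓ'sub : ↑Γ' ⊆ Set.Icc 1 T'.length := by
    rw [hlen']
    intro x hx
    simp only [hΓ', Finset.coe_union, Set.mem_union, Finset.mem_coe, Finset.mem_singleton,
      Finset.coe_singleton, Set.mem_singleton_iff] at hx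
    rcases hx with ((hx | hx) | hx) | hx
    · have := hΓsub hx; rw [← hn] at this; exact this
    · subst hx; exact ⟨by omega, hin⟩
    · rw [hR] at hx
      simp only [Finset.mem_image, Finset.mem_range] at hx
      obtain ⟨j, hj, rfl⟩ := hx
      have hj' : j ≤ (n - 1) / s := by omega
      have : j * s ≤ ((n - 1) / s) * s := Nat.mul_le_mul_right s hj'
      have h2 : ((n - 1) / s) * s ≤ n - 1 := Nat.div_mul_le_self _ _
      exact ⟨by omega, by omega⟩
    · rw [hF] at hx
      simp only [Finset.mem_image, Finset.mem_range] at hx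
      obtain ⟨a', _, rfl⟩ := hx
      by_cases h : P a' (g a')
      · obtain ⟨h01, h02, _, _⟩ := Classical.choose_spec h
        rw [hf]
        simp only [dif_pos h]
        exact ⟨by omega, by omega⟩
      · rw [hf]; simp only [dif_neg h]; exact ⟨le_refl 1, hn1⟩
  -- Γ' is an attractor for T'
  have hattr' : IsAttractor T' ↑Γ' := by
    intro l r h1 h2 h3
    rw [hlen'] at h3
    by_cases hcross : l ≤ i ∧ i ≤ r
    · exact ⟨l, r, i, h1, h2, by rw [hlen']; exact h3, rfl,
        hmemΓ' i (Or.inr (Or.inl rfl)), hcross.1, hcross.2⟩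
    by_cases hlong : s ≤ r - l + 1
    · -- ruler position
      set j : ℕ := (l - 1 + (s - 1)) / s with hj
      have hjle : j * s ≤ l - 1 + (s - 1) := Nat.div_mul_le_self _ _
      have hjge : l - 1 ≤ j * s := by
        have hmod := Nat.div_add_mod (l - 1 + (s - 1)) s
        have hlt : (l - 1 + (s - 1)) % s < s := Nat.mod_lt _ hspos
        have : j * s = s * ((l - 1 + (s - 1)) / s) := by rw [hj, Nat.mul_comm]
        omega
      have hjmem : j * s + 1 ∈ R := by
        rw [hR]
        simp only [Finset.mem_image, Finset.mem_range]
        refine ⟨j, ?_, rfl⟩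
        have : j * s ≤ n - 1 := by omega
        have := (Nat.le_div_iff_mul_le hspos).mpr this
        omega
      exact ⟨l, r, j * s + 1, h1, h2, by rw [hlen']; exact h3, rfl,
        hmemΓ' _ (Or.inr (Or.inr (Or.inl hjmem))), by omega, by omega⟩
    · -- short, non-crossing: use the attractor of T
      have havoid : r < i ∨ i < l := by omega
      have hS : subStr T' l r = subStr T l r := agree l r h1 h2 havoid
      obtain ⟨l', r', p, h1', h2', h3', heq, hpΓ, hpl, hpr⟩ :=
        hΓattr l r h1 h2 (by rw [← hn]; exact h3)
      rw [← hn] at h3'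
      by_cases hcross' : l' ≤ i ∧ i ≤ r'
      · -- the Γ-occurrence crosses i : use the stored occurrence
        have e1 := subStr_length T h1' h2' (by rw [← hn] at *; exact h3')
        have e2 := subStr_length T h1 h2 (by rw [← hn]; exact h3)
        rw [heq] at e1
        have hlen_eq : r' - l' = r - l := by omega
        set a' : ℕ := i - l' with ha'
        set b' : ℕ := r' - i with hb'
        have hab : a' + b' = r - l := by omega
        have hPab : P a' b' := by
          rw [hP]
          refine ⟨l, h1, by omega, by omega, ?_⟩
          rw [show l + a' + b' = r by omega, show i - a' = l' by omega,
            show i + b' = r' by omega]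
          exact heq.symm
        have hble : b' ≤ s - 1 := by omega
        have hPg : P a' (g a') := by
          rw [hg]
          exact Nat.findGreatest_spec hble hPab
        have hbg : b' ≤ g a' := Nat.le_findGreatest hble hPab
        obtain ⟨h01, h02, h03, h04⟩ := Classical.choose_spec hPg
        set l₀ : ℕ := Classical.choose hPg with hl₀
        have hfa : f a' = l₀ + a' := by rw [hf]; simp only [dif_pos hPg]; rfl
        have hfmem : l₀ + a' ∈ F := by
          rw [hF]
          simp only [Finset.mem_image, Finset.mem_range]
          exact ⟨a', by omega, hfa⟩
        refine ⟨l₀, l₀ + a' + b', l₀ + a', h01, by omega, ?_, ?_,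
          hmemΓ' _ (Or.inr (Or.inr (Or.inr hfmem))), by omega, by omega⟩
        · rw [hlen']; omega
        · -- subStr T' l₀ (l₀+a'+b') = subStr T' l r
          have eav : subStr T' l₀ (l₀ + a' + b') = subStr T l₀ (l₀ + a' + b') :=
            agree _ _ h01 (by omega) (by omega)
          have epre1 : subStr T l₀ (l₀ + (a' + b')) =
              (subStr T l₀ (l₀ + (a' + g a'))).take (a' + b' + 1) :=
            subStr_take_prefix T l₀ (a' + b') (a' + g a') (by omega)
          have epre2 : subStr T (i - a') ((i - a') + (a' + b')) =
              (subStr T (i - a') ((i - a') + (a' + g a'))).take (a' + b' + 1) :=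
            subStr_take_prefix T (i - a') (a' + b') (a' + g a') (by omega)
          have hia : i - a' + (a' + b') = i + b' := by omega
          have hia2 : i - a' + (a' + g a') = i + g a' := by omega
          rw [hia] at epre2
          rw [hia2] at epre2
          calc subStr T' l₀ (l₀ + a' + b') = subStr T l₀ (l₀ + a' + b') := eav
            _ = (subStr T l₀ (l₀ + (a' + g a'))).take (a' + b' + 1) := by
                rw [show l₀ + a' + b' = l₀ + (a' + b') by omega]; exact epre1
            _ = (subStr T (i - a') (i + g a')).take (a' + b' + 1) := by
                rw [show l₀ + (a' + g a') = l₀ + a' + g a' by omega, h04]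
            _ = subStr T (i - a') (i + b') := epre2.symm
            _ = subStr T l' r' := by
                rw [show i - a' = l' by omega, show i + b' = r' by omega]
            _ = subStr T l r := heq
            _ = subStr T' l r := hS.symm
      · -- the Γ-occurrence avoids i
        have havoid' : r' < i ∨ i < l' := by omega
        refine ⟨l', r', p, h1', h2', by rw [hlen']; exact h3',
          ?_, hmemΓ' p (Or.inl hpΓ), hpl, hpr⟩
        rw [agree l' r' h1' h2' havoid', heq, hS]
  -- cardinality bound
  have hcard' : Γ'.card ≤ Γ.card + 1 + ((n - 1) / s + 1) + s := by
    rw [hΓ']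
    calc (Γ ∪ {i} ∪ R ∪ F).card ≤ (Γ ∪ {i} ∪ R).card + F.card := Finset.card_union_le _ _
      _ ≤ (Γ ∪ {i}).card + R.card + F.card := by
          have := Finset.card_union_le (Γ ∪ {i}) R; omega
      _ ≤ Γ.card + 1 + R.card + F.card := by
          have := Finset.card_union_le Γ ({i} : Finset ℕ)
          simp only [Finset.card_singleton] at this; omega
      _ ≤ Γ.card + 1 + ((n - 1) / s + 1) + s := by
          have h1 : R.card ≤ (n - 1) / s + 1 := by
            rw [hR]
            exact le_trans (Finset.card_image_le) (by simp)
          have h2 : F.card ≤ s := by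
            rw [hF]
            exact le_trans (Finset.card_image_le) (by simp)
          omega
  have hγ' : gammaAttr T' ≤ Γ.card + 1 + ((n - 1) / s + 1) + s := by
    refine le_trans (Nat.sInf_le ⟨Γ', hΓ'sub, hattr', rfl⟩) hcard'
  -- arithmetic
  have hdiv : (n - 1) / s ≤ Nat.sqrt n := by
    have h2 : n < s * s := by
      have := Nat.lt_succ_sqrt n
      simpa [hs, Nat.succ_eq_add_one] using this
    have : (n - 1) / s < s := by
      rw [Nat.div_lt_iff_lt_mul hspos]; omega
    omega
  have hsq1 : 1 ≤ Nat.sqrt n := by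
    have := Nat.sqrt_pos (n := n).mpr (by omega)
    omega
  have hnat : gammaAttr T' ≤ gammaAttr T + 5 * Nat.sqrt n := by
    rw [← hΓcard]
    omega
  have hsqle : (Nat.sqrt n : ℝ) ≤ Real.sqrt n := by
    rw [show ((Nat.sqrt n : ℝ)) = Real.sqrt ((Nat.sqrt n : ℝ) ^ 2) from
      (Real.sqrt_sq (by positivity)).symm]
    apply Real.sqrt_le_sqrt
    have := Nat.sqrt_le' n
    exact_mod_cast this
  have hfin : (gammaAttr T' : ℝ) ≤ gammaAttr T + 5 * Real.sqrt n := by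
    calc (gammaAttr T' : ℝ) ≤ (gammaAttr T : ℝ) + 5 * (Nat.sqrt n : ℝ) := by
          exact_mod_cast hnat
      _ ≤ gammaAttr T + 5 * Real.sqrt n := by linarith
  exact hfin
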